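/- Let X and Y be independent exponentially distributed random variables with means Ω_X > 0 and Ω_Y > 0, let δ1, δ2, x0, y0, ρ > 0 with δ2·y0 > δ1·x0 and ρ ≥ δ1/y0, and set λ1 = max{x0, δ2/ρ}. Define P*(x,y) = max{δ1/y, δ2/x} if x ≥ x0, y ≥ y0, and max{δ1/y, δ2/x} ≤ ρ, and P*(x,y) = 0 otherwise. Then the average relay output power equals E[P*(X,Y)] = (δ2/Ω_X)·E1(λ1/Ω_X)·e^{−y0/Ω_Y} − (δ2/Ω_X)·E1(δ2·y0/(δ1·Ω_X))·e^{−y0/Ω_Y} + (δ2/Ω_X)·E1((1/Ω_Y + δ2/(δ1·Ω_X))·y0) + (δ1/Ω_Y)·E1((1/Ω_Y + δ2/(δ1·Ω_X))·y0), where E1(z) = ∫_z^{∞}(e^{−t}/t) dt. -/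

import Mathlib

open MeasureTheory ProbabilityTheory

/-- The exponential integral `E1(z) = ∫_z^∞ e^{-t}/t dt`. -/
noncomputable def expInt (z : ℝ) : ℝ := ∫ t in Set.Ioi z, Real.exp (-t) / t

namespace StmtNineAux

open MeasureTheory Set Real Function ProbabilityTheory
open scoped ENNReal NNReal

lemma integrableOn_expdiv {c z : ℝ} (hc : 0 < c) (hz : 0 < z) :
    IntegrableOn (fun t => Real.exp (-(c*t)) / t) (Set.Ioi z) := by
  refine Integrable.mono' ((exp_neg_integrableOn_Ioi z hc).const_mul z⁻¹) ?_ ?_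
  · exact ((((measurable_const.mul measurable_id).neg).exp).div measurable_id).aestronglyMeasurable
  · filter_upwards [ae_restrict_mem measurableSet_Ioi] with t ht
    have ht0 : 0 < t := hz.trans ht
    rw [Real.norm_eq_abs, abs_of_nonneg (by positivity), neg_mul]
    rw [div_le_iff₀ ht0, mul_comm z⁻¹, mul_assoc]
    nlinarith [Real.exp_pos (-(c*t)), inv_mul_cancel₀ hz.ne',
      mul_le_mul_of_nonneg_left (le_of_lt ht) (mul_pos (Real.exp_pos (-(c*t))) (inv_pos.mpr hz)).le]

lemma expInt_scale {c z : ℝ} (hc : 0 < c) (hz : 0 < z) :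
    ∫ s in Set.Ioi z, Real.exp (-(c*s)) / s = expInt (c*z) := by
  have h := integral_comp_mul_left_Ioi (fun t => Real.exp (-t) / t) z hc
  have e : ∀ s : ℝ, Real.exp (-(c*s)) / s = c * (Real.exp (-(c*s)) / (c*s)) := by
    intro s
    rcases eq_or_ne s 0 with rfl | hs
    · simp
    · field_simp
  simp_rw [e]
  rw [MeasureTheory.integral_const_mul, h, smul_eq_mul, expInt]
  field_simp

lemma expInt_nonneg {z : ℝ} (hz : 0 < z) : 0 ≤ expInt z := by
  apply setIntegral_nonneg measurableSet_Ioi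
  intro t ht
  have : 0 < t := hz.trans ht
  positivity

lemma expInt_le {w z : ℝ} (hw : 0 < w) (hwz : w ≤ z) : expInt z ≤ expInt w := by
  have h1 : IntegrableOn (fun t : ℝ => Real.exp (-t) / t) (Set.Ioi w) := by
    simpa using integrableOn_expdiv one_pos hw
  refine setIntegral_mono_set h1 ?_ (HasSubset.Subset.eventuallyLE (Ioi_subset_Ioi hwz))
  filter_upwards [ae_restrict_mem measurableSet_Ioi] with t ht
  have : 0 < t := hw.trans ht
  positivity

lemma integral_c_exp_Ioi {c : ℝ} (z : ℝ) (hc : 0 < c) :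
    ∫ x in Set.Ioi z, c * Real.exp (-(c*x)) = Real.exp (-(c*z)) := by
  rw [MeasureTheory.integral_const_mul]
  have h := integral_comp_mul_left_Ioi (fun t => Real.exp (-t)) z hc
  rw [h, integral_exp_neg_Ioi, smul_eq_mul]
  field_simp

lemma integral_c_exp_Ioo {c z w : ℝ} (hc : 0 < c) (hzw : z ≤ w) :
    ∫ y in Set.Ioo z w, c * Real.exp (-(c*y)) = Real.exp (-(c*z)) - Real.exp (-(c*w)) := by
  rw [← MeasureTheory.integral_Ioc_eq_integral_Ioo,
      ← intervalIntegral.integral_of_le hzw]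
  have h : ∀ y ∈ Set.uIcc z w, HasDerivAt (fun a => -Real.exp (-(c*a))) (c * Real.exp (-(c*y))) y :=
    fun y _ => ProbabilityTheory.hasDerivAt_neg_exp_mul_exp
  rw [intervalIntegral.integral_eq_sub_of_hasDerivAt h ?_]
  · ring
  · apply Continuous.intervalIntegrable
    continuity

lemma expInt_split {c z w : ℝ} (hc : 0 < c) (hz : 0 < z) (hzw : z ≤ w) :
    ∫ t in Set.Ioc z w, Real.exp (-(c*t)) / t = expInt (c*z) - expInt (c*w) := by
  have hw : 0 < w := hz.trans_le hzw
  have hu : Set.Ioc z w ∪ Set.Ioi w = Set.Ioi z := Set.Ioc_union_Ioi_eq_Ioi hzw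
  have hint : ∫ t in Set.Ioc z w ∪ Set.Ioi w, Real.exp (-(c*t)) / t
      = (∫ t in Set.Ioc z w, Real.exp (-(c*t)) / t) + ∫ t in Set.Ioi w, Real.exp (-(c*t)) / t := by
    apply setIntegral_union (Set.Ioc_disjoint_Ioi le_rfl) measurableSet_Ioi
    · exact (integrableOn_expdiv hc hz).mono_set (by rw [← hu]; exact Set.subset_union_left)
    · exact integrableOn_expdiv hc hw
  rw [hu, expInt_scale hc hz, expInt_scale hc hw] at hint
  linarith

lemma key_swap {b c y0 : ℝ} (hb : 0 < b) (hc : 0 < c) (hy0 : 0 < y0) :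
    ∫ y in Set.Ioi y0, b * Real.exp (-(b*y)) * expInt (c*y)
      = Real.exp (-(b*y0)) * expInt (c*y0) - expInt ((b+c)*y0) := by
  set μ0 := volume.restrict (Set.Ioi y0) with hμ0
  set f : ℝ → ℝ → ℝ :=
    fun y s => if y < s then (b * Real.exp (-(b*y))) * (Real.exp (-(c*s))/s) else 0 with hf
  have hmeas : Measurable (uncurry f) := by
    apply Measurable.ite (measurableSet_lt measurable_fst measurable_snd)
    · exact ((measurable_const.mul (((measurable_const.mul measurable_fst).neg).exp)).mul
        ((((measurable_const.mul measurable_snd).neg).exp).div measurable_snd))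
    · exact measurable_const
  have hint : Integrable (uncurry f) (μ0.prod μ0) := by
    refine Integrable.mono' ((((exp_neg_integrableOn_Ioi y0 hb).const_mul b)).mul_prod
      ((exp_neg_integrableOn_Ioi y0 hc).const_mul y0⁻¹)) hmeas.aestronglyMeasurable ?_
    rw [hμ0, Measure.prod_restrict]
    filter_upwards [ae_restrict_mem (measurableSet_Ioi.prod measurableSet_Ioi)] with p hp
    obtain ⟨hp1, hp2⟩ := hp
    simp only [uncurry, hf, Real.norm_eq_abs]
    have hs0 : 0 < p.2 := hy0.trans hp2
    split_ifs with h
    · rw [abs_of_nonneg (by positivity), div_eq_inv_mul]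
      simp only [neg_mul]
      gcongr
      exact le_of_lt hp2
    · simp
      positivity
  have hswap := MeasureTheory.integral_integral_swap hint
  have hLHS : ∫ y, ∫ s, f y s ∂μ0 ∂μ0
      = ∫ y in Set.Ioi y0, b * Real.exp (-(b*y)) * expInt (c*y) := by
    rw [hμ0]
    apply setIntegral_congr_ae measurableSet_Ioi
    filter_upwards with y hy
    have hy0y : 0 < y := hy0.trans hy
    have e1 : (fun s => f y s) = fun s =>
        (Set.Ioi y).indicator (fun s => (b * Real.exp (-(b*y))) * (Real.exp (-(c*s))/s)) s := by
      ext s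
      rw [Set.indicator_apply]
      simp [hf, Set.mem_Ioi]
    rw [e1, setIntegral_indicator measurableSet_Ioi, Set.Ioi_inter_Ioi, max_eq_right (le_of_lt hy),
      MeasureTheory.integral_const_mul, expInt_scale hc hy0y]
  have hRHS : ∫ s, ∫ y, f y s ∂μ0 ∂μ0
      = Real.exp (-(b*y0)) * expInt (c*y0) - expInt ((b+c)*y0) := by
    rw [hμ0]
    have step1 : ∫ s in Set.Ioi y0, (∫ y, f y s ∂μ0)
        = ∫ s in Set.Ioi y0,
            (Real.exp (-(c*s))/s * (Real.exp (-(b*y0)) - Real.exp (-(b*s)))) := by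
      apply setIntegral_congr_ae measurableSet_Ioi
      filter_upwards with s hs
      have e1 : (fun y => f y s) = fun y =>
          (Set.Iio s).indicator (fun y => (Real.exp (-(c*s))/s) * (b * Real.exp (-(b*y)))) y := by
        ext y
        rw [Set.indicator_apply]
        simp only [hf, Set.mem_Iio]
        split_ifs with h
        · ring
        · rfl
      rw [hμ0, e1, setIntegral_indicator measurableSet_Iio, Set.Ioi_inter_Iio,
        MeasureTheory.integral_const_mul, integral_c_exp_Ioo hb (le_of_lt hs)]
    rw [step1]
    have e2 : ∀ s ∈ Set.Ioi y0, Real.exp (-(c*s))/s * (Real.exp (-(b*y0)) - Real.exp (-(b*s)))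
        = Real.exp (-(b*y0)) * (Real.exp (-(c*s))/s) - Real.exp (-((b+c)*s))/s := by
      intro s hs
      have hs0 : 0 < s := hy0.trans hs
      have hexp : Real.exp (-((b+c)*s)) = Real.exp (-(c*s)) * Real.exp (-(b*s)) := by
        rw [← Real.exp_add]; ring_nf
      rw [hexp]
      field_simp
    rw [setIntegral_congr_fun measurableSet_Ioi e2,
      MeasureTheory.integral_sub (((integrableOn_expdiv hc hy0)).const_mul _)
        (integrableOn_expdiv (by positivity) hy0),
      MeasureTheory.integral_const_mul, expInt_scale hc hy0,
      expInt_scale (by positivity : (0:ℝ) < b + c) hy0]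
  rw [← hLHS, hswap, hRHS]

lemma integral_expMeasure {r : ℝ} (hr : 0 < r) (g : ℝ → ℝ) :
    ∫ x, g x ∂(expMeasure r) = ∫ x, exponentialPDFReal r x * g x := by
  have hd : expMeasure r
      = volume.withDensity (fun x => ((exponentialPDFReal r x).toNNReal : ℝ≥0∞)) := rfl
  rw [hd, integral_withDensity_eq_integral_smul (measurable_exponentialPDFReal r).real_toNNReal]
  congr 1
  ext x
  rw [NNReal.smul_def, Real.coe_toNNReal _ (exponentialPDFReal_nonneg hr x), smul_eq_mul]

lemma exponentialPDFReal_eq (r x : ℝ) :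
    exponentialPDFReal r x = if 0 ≤ x then r * Real.exp (-(r*x)) else 0 := by
  rw [exponentialPDFReal, gammaPDFReal]
  simp only [rpow_one, Real.Gamma_one, div_one, sub_self, rpow_zero, mul_one]

lemma xint {a L m A B : ℝ} (ha : 0 < a) (hL : 0 < L) (hLm : L ≤ m)
    (h : ℝ → ℝ) (hh1 : ∀ x ∈ Set.Ioc L m, h x = B / x) (hh2 : ∀ x ∈ Set.Ioi m, h x = A) :
    ∫ x in Set.Ioi L, a * Real.exp (-(a*x)) * h x
      = a*B*(expInt (a*L) - expInt (a*m)) + A * Real.exp (-(a*m)) := by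
  have hm : 0 < m := hL.trans_le hLm
  have hu : Set.Ioc L m ∪ Set.Ioi m = Set.Ioi L := Set.Ioc_union_Ioi_eq_Ioi hLm
  have e1 : ∀ x ∈ Set.Ioc L m, a * Real.exp (-(a*x)) * h x = (a*B) * (Real.exp (-(a*x)) / x) := by
    intro x hx; rw [hh1 x hx]; ring
  have e2 : ∀ x ∈ Set.Ioi m, a * Real.exp (-(a*x)) * h x = A * (a * Real.exp (-(a*x))) := by
    intro x hx; rw [hh2 x hx]; ring
  have i1 : IntegrableOn (fun x => a * Real.exp (-(a*x)) * h x) (Set.Ioc L m) := by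
    apply IntegrableOn.congr_fun (f := fun x => (a*B) * (Real.exp (-(a*x)) / x)) ?_
      (fun x hx => (e1 x hx).symm) measurableSet_Ioc
    exact IntegrableOn.mono_set ((integrableOn_expdiv ha hL).const_mul (a*B))
      Set.Ioc_subset_Ioi_self
  have i2 : IntegrableOn (fun x => a * Real.exp (-(a*x)) * h x) (Set.Ioi m) := by
    apply IntegrableOn.congr_fun (f := fun x => A * (a * Real.exp (-(a*x)))) ?_
      (fun x hx => (e2 x hx).symm) measurableSet_Ioi
    have hb : IntegrableOn (fun x => Real.exp (-(a*x))) (Set.Ioi m) := by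
      simpa [neg_mul] using exp_neg_integrableOn_Ioi m ha
    exact (hb.const_mul a).const_mul A
  rw [← hu, setIntegral_union (Set.Ioc_disjoint_Ioi le_rfl) measurableSet_Ioi i1 i2,
    setIntegral_congr_fun measurableSet_Ioc e1, setIntegral_congr_fun measurableSet_Ioi e2,
    MeasureTheory.integral_const_mul, MeasureTheory.integral_const_mul,
    expInt_split ha hL hLm, integral_c_exp_Ioi m ha]

lemma integrableOn_exp_expInt {b c y0 : ℝ} (hb : 0 < b) (hc : 0 < c) (hy0 : 0 < y0) :
    IntegrableOn (fun y => b * Real.exp (-(b*y)) * expInt (c*y)) (Set.Ioi y0) := by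
  have hmono : Antitone (fun y : ℝ => expInt (c * max y y0)) := by
    intro y1 y2 h12
    exact expInt_le (by positivity) (mul_le_mul_of_nonneg_left (max_le_max h12 le_rfl) hc.le)
  refine Integrable.mono'
    ((exp_neg_integrableOn_Ioi y0 hb).const_mul (b * expInt (c*y0))) ?_ ?_
  · apply AEStronglyMeasurable.congr
      (f := fun y => b * Real.exp (-(b*y)) * expInt (c * max y y0))
    · exact ((measurable_const.mul ((measurable_const.mul measurable_id).neg.exp)).mul
        hmono.measurable).aestronglyMeasurable
    · filter_upwards [ae_restrict_mem measurableSet_Ioi] with y hy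
      rw [max_eq_left (le_of_lt hy)]
  · filter_upwards [ae_restrict_mem measurableSet_Ioi] with y hy
    have hyy : 0 < y := hy0.trans hy
    have h1 : expInt (c*y) ≤ expInt (c*y0) := expInt_le (by positivity) (mul_le_mul_of_nonneg_left hy.le hc.le)
    have h2 : 0 ≤ expInt (c*y) := expInt_nonneg (by positivity)
    rw [Real.norm_eq_abs, abs_of_nonneg (by positivity), neg_mul]
    calc b * Real.exp (-(b*y)) * expInt (c*y)
        ≤ b * Real.exp (-(b*y)) * expInt (c*y0) := by
          apply mul_le_mul_of_nonneg_left h1 (by positivity)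
      _ = b * expInt (c*y0) * Real.exp (-(b*y)) := by ring

end StmtNineAux

open StmtNineAux Set Real in
/-- average relay output power of the optimal truncated allocation in the
regime `δ2 y0 > δ1 x0`, `ρ ≥ δ1/y0`, with `lam1 = max x0 (δ2/ρ)`. -/
theorem stmt_9 {Ωsp : Type*} [MeasurableSpace Ωsp] (μ : Measure Ωsp)
    [IsProbabilityMeasure μ]
    (X Y : Ωsp → ℝ) (hX : Measurable X) (hY : Measurable Y)
    (hindep : IndepFun X Y μ)
    (ΩX ΩY δ1 δ2 x0 y0 ρ : ℝ)
    (hΩX : 0 < ΩX) (hΩY : 0 < ΩY) (hδ1 : 0 < δ1) (hδ2 : 0 < δ2)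
    (hx0 : 0 < x0) (hy0 : 0 < y0) (hρ : 0 < ρ)
    (hreg : δ1 * x0 < δ2 * y0) (hρge : δ1 / y0 ≤ ρ)
    (hXdist : Measure.map X μ = expMeasure (1 / ΩX))
    (hYdist : Measure.map Y μ = expMeasure (1 / ΩY))
    (lam1 : ℝ) (hlam1 : lam1 = max x0 (δ2 / ρ))
    (Pstar : ℝ → ℝ → ℝ)
    (hPstar : ∀ x y, Pstar x y =
      if x0 ≤ x ∧ y0 ≤ y ∧ max (δ1 / y) (δ2 / x) ≤ ρ
      then max (δ1 / y) (δ2 / x) else 0) :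
    ∫ ω, Pstar (X ω) (Y ω) ∂μ =
      (δ2 / ΩX) * expInt (lam1 / ΩX) * Real.exp (-y0 / ΩY)
      - (δ2 / ΩX) * expInt (δ2 * y0 / (δ1 * ΩX)) * Real.exp (-y0 / ΩY)
      + (δ2 / ΩX) * expInt ((1 / ΩY + δ2 / (δ1 * ΩX)) * y0)
      + (δ1 / ΩY) * expInt ((1 / ΩY + δ2 / (δ1 * ΩX)) * y0) := by
  have ha : 0 < 1/ΩX := by positivity
  have hb : 0 < 1/ΩY := by positivity
  set c : ℝ := (1/ΩX) * (δ2/δ1) with hcdef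
  have hc : 0 < c := by positivity
  have hbc : 0 < 1/ΩY + c := by positivity
  have hlam1pos : 0 < lam1 := hlam1 ▸ lt_of_lt_of_le hx0 (le_max_left _ _)
  have hklam : lam1 ≤ δ2/δ1 * y0 := by
    rw [hlam1]
    have hd : δ1 ≤ ρ * y0 := by
      rw [div_le_iff₀ hy0] at hρge; linarith
    apply max_le
    · rw [div_mul_eq_mul_div, le_div_iff₀ hδ1]; nlinarith
    · rw [div_mul_eq_mul_div, div_le_div_iff₀ hρ hδ1]; nlinarith
  -- characterization of Pstar
  have hchar : ∀ x y : ℝ, Pstar x y = if lam1 ≤ x ∧ y0 ≤ y then max (δ1/y) (δ2/x) else 0 := by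
    intro x y
    have hiff : (x0 ≤ x ∧ y0 ≤ y ∧ max (δ1 / y) (δ2 / x) ≤ ρ) ↔ (lam1 ≤ x ∧ y0 ≤ y) := by
      constructor
      · rintro ⟨hx, hy, hm⟩
        have hxpos : 0 < x := lt_of_lt_of_le hx0 hx
        refine ⟨?_, hy⟩
        rw [hlam1]
        apply max_le hx
        have h1 : δ2/x ≤ ρ := le_trans (le_max_right _ _) hm
        rw [div_le_iff₀ hxpos] at h1
        rw [div_le_iff₀ hρ]
        linarith
      · rintro ⟨hx, hy⟩
        have hxpos : 0 < x := lt_of_lt_of_le hlam1pos hx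
        have hypos : 0 < y := lt_of_lt_of_le hy0 hy
        refine ⟨le_trans (hlam1 ▸ le_max_left _ _) hx, hy, max_le ?_ ?_⟩
        · calc δ1/y ≤ δ1/y0 := by gcongr
            _ ≤ ρ := hρge
        · have h1 : δ2/ρ ≤ x := le_trans (hlam1 ▸ le_max_right _ _) hx
          rw [div_le_iff₀ hρ] at h1
          rw [div_le_iff₀ hxpos]
          linarith
    rw [hPstar, if_congr hiff rfl rfl]
  have hPm : Measurable (fun p : ℝ × ℝ => Pstar p.1 p.2) := by
    have e : (fun p : ℝ × ℝ => Pstar p.1 p.2)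
        = fun p : ℝ × ℝ => if lam1 ≤ p.1 ∧ y0 ≤ p.2 then max (δ1/p.2) (δ2/p.1) else 0 := by
      ext p; exact hchar p.1 p.2
    rw [e]
    refine Measurable.ite ?_ ?_ measurable_const
    · exact (measurableSet_le measurable_const measurable_fst).inter
        (measurableSet_le measurable_const measurable_snd)
    · exact (measurable_const.div measurable_snd).max (measurable_const.div measurable_fst)
  have hPb : ∀ x y : ℝ, ‖Pstar x y‖ ≤ ρ := by
    intro x y
    rw [hPstar, Real.norm_eq_abs]
    split_ifs with h
    · obtain ⟨hx, hy, hm⟩ := h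
      have hypos : 0 < y := lt_of_lt_of_le hy0 hy
      rw [abs_of_nonneg (le_trans (by positivity : (0:ℝ) ≤ δ1/y) (le_max_left (δ1/y) (δ2/x)))]
      exact hm
    · simpa using hρ.le
  haveI iX : IsProbabilityMeasure (expMeasure (1/ΩX)) := isProbabilityMeasure_expMeasure ha
  haveI iY : IsProbabilityMeasure (expMeasure (1/ΩY)) := isProbabilityMeasure_expMeasure hb
  have hmap : μ.map (fun ω => (X ω, Y ω)) = (μ.map X).prod (μ.map Y) :=
    (ProbabilityTheory.indepFun_iff_map_prod_eq_prod_map_map hX.aemeasurable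
      hY.aemeasurable).mp hindep
  have step1 : ∫ ω, Pstar (X ω) (Y ω) ∂μ
      = ∫ p : ℝ × ℝ, Pstar p.1 p.2 ∂((expMeasure (1/ΩX)).prod (expMeasure (1/ΩY))) := by
    rw [← hXdist, ← hYdist, ← hmap]
    exact (integral_map (hX.prodMk hY).aemeasurable hPm.aestronglyMeasurable).symm
  have hPint : Integrable (fun p : ℝ×ℝ => Pstar p.1 p.2)
      ((expMeasure (1/ΩX)).prod (expMeasure (1/ΩY))) :=
    (integrable_const ρ).mono' hPm.aestronglyMeasurable
      (Filter.Eventually.of_forall fun p => hPb p.1 p.2)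
  have step2 : ∫ p : ℝ × ℝ, Pstar p.1 p.2 ∂((expMeasure (1/ΩX)).prod (expMeasure (1/ΩY)))
      = ∫ y, (∫ x, Pstar x y ∂(expMeasure (1/ΩX))) ∂(expMeasure (1/ΩY)) :=
    MeasureTheory.integral_prod_symm _ hPint
  set G : ℝ → ℝ := fun y => if y0 ≤ y then
      (1/ΩX)*δ2*(expInt ((1/ΩX)*lam1) - expInt (c*y)) + (δ1/y)*Real.exp (-(c*y)) else 0 with hG
  have hinner : ∀ y : ℝ, ∫ x, Pstar x y ∂(expMeasure (1/ΩX)) = G y := by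
    intro y
    rw [integral_expMeasure ha]
    simp only [hG]
    by_cases hy : y0 ≤ y
    · have hypos : 0 < y := lt_of_lt_of_le hy0 hy
      rw [if_pos hy]
      have e : (fun x => exponentialPDFReal (1/ΩX) x * Pstar x y)
          = (Set.Ici lam1).indicator
              (fun x => (1/ΩX) * Real.exp (-((1/ΩX)*x)) * max (δ1/y) (δ2/x)) := by
        ext x
        rw [Set.indicator_apply, hchar]
        simp only [Set.mem_Ici]
        by_cases hx : lam1 ≤ x
        · rw [if_pos ⟨hx, hy⟩, if_pos hx, exponentialPDFReal_eq,
            if_pos (le_trans hlam1pos.le hx)]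
        · rw [if_neg (fun hcon => hx hcon.1), if_neg hx, mul_zero]
      rw [e, integral_indicator measurableSet_Ici, integral_Ici_eq_integral_Ioi]
      have hLm : lam1 ≤ δ2/δ1 * y := le_trans hklam (by gcongr)
      have hmpos : 0 < δ2/δ1 * y := by positivity
      have hh1 : ∀ x ∈ Set.Ioc lam1 (δ2/δ1 * y), max (δ1/y) (δ2/x) = δ2 / x := by
        intro x hx
        apply max_eq_right
        have hxpos : 0 < x := hlam1pos.trans hx.1
        rw [div_le_div_iff₀ hypos hxpos]
        have h1 : δ1 * x ≤ δ1 * (δ2/δ1*y) := mul_le_mul_of_nonneg_left hx.2 hδ1.le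
        have h2 : δ1 * (δ2/δ1*y) = δ2*y := by field_simp
        linarith
      have hh2 : ∀ x ∈ Set.Ioi (δ2/δ1 * y), max (δ1/y) (δ2/x) = δ1 / y := by
        intro x hx
        apply max_eq_left
        have hxpos : 0 < x := hmpos.trans hx
        rw [div_le_div_iff₀ hxpos hypos]
        have h1 : δ1 * (δ2/δ1*y) ≤ δ1 * x :=
          mul_le_mul_of_nonneg_left (le_of_lt hx) hδ1.le
        have h2 : δ1 * (δ2/δ1*y) = δ2*y := by field_simp
        linarith
      rw [xint ha hlam1pos hLm _ hh1 hh2]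
      have harg : (1/ΩX)*(δ2/δ1*y) = c*y := by rw [hcdef]; ring
      rw [harg]
    · rw [if_neg hy]
      have e : (fun x => exponentialPDFReal (1/ΩX) x * Pstar x y) = fun _ => (0:ℝ) := by
        ext x
        rw [hchar, if_neg (fun hcon => hy hcon.2), mul_zero]
      rw [e, integral_zero]
  rw [step1, step2]
  simp_rw [hinner]
  rw [integral_expMeasure hb]
  set J : ℝ → ℝ := fun y => (1/ΩY) * Real.exp (-((1/ΩY)*y)) *
      ((1/ΩX)*δ2*(expInt ((1/ΩX)*lam1) - expInt (c*y)) + (δ1/y)*Real.exp (-(c*y))) with hJ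
  have eG : (fun y => exponentialPDFReal (1/ΩY) y * G y) = (Set.Ici y0).indicator J := by
    ext y
    rw [Set.indicator_apply]
    simp only [hG, hJ]
    simp only [Set.mem_Ici]
    by_cases hy : y0 ≤ y
    · rw [if_pos hy, if_pos hy, exponentialPDFReal_eq, if_pos (le_trans hy0.le hy)]
    · rw [if_neg hy, if_neg hy, mul_zero]
  rw [eG, integral_indicator measurableSet_Ici, integral_Ici_eq_integral_Ioi]
  have edec : ∀ y ∈ Set.Ioi y0, J y
      = ((1/ΩX)*δ2*expInt ((1/ΩX)*lam1)) * ((1/ΩY)*Real.exp (-((1/ΩY)*y)))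
        - ((1/ΩX)*δ2) * ((1/ΩY)*Real.exp (-((1/ΩY)*y)) * expInt (c*y))
        + (δ1*(1/ΩY)) * (Real.exp (-((1/ΩY + c)*y))/y) := by
    intro y hy
    have hypos : 0 < y := hy0.trans hy
    simp only [hJ]
    have hexp : Real.exp (-((1/ΩY + c)*y)) = Real.exp (-((1/ΩY)*y)) * Real.exp (-(c*y)) := by
      rw [← Real.exp_add]; ring_nf
    rw [hexp]
    field_simp
  rw [setIntegral_congr_fun measurableSet_Ioi edec]
  have ibase : IntegrableOn (fun y => Real.exp (-((1/ΩY)*y))) (Set.Ioi y0) := by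
    simpa [neg_mul] using exp_neg_integrableOn_Ioi y0 hb
  have iA : IntegrableOn (fun y =>
      ((1/ΩX)*δ2*expInt ((1/ΩX)*lam1)) * ((1/ΩY)*Real.exp (-((1/ΩY)*y)))) (Set.Ioi y0) :=
    (ibase.const_mul _).const_mul _
  have iB : IntegrableOn (fun y =>
      ((1/ΩX)*δ2) * ((1/ΩY)*Real.exp (-((1/ΩY)*y)) * expInt (c*y))) (Set.Ioi y0) :=
    (integrableOn_exp_expInt hb hc hy0).const_mul _
  have iC : IntegrableOn (fun y =>
      (δ1*(1/ΩY)) * (Real.exp (-((1/ΩY + c)*y))/y)) (Set.Ioi y0) :=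
    (integrableOn_expdiv hbc hy0).const_mul _
  have iAB : IntegrableOn (fun y =>
      ((1/ΩX)*δ2*expInt ((1/ΩX)*lam1)) * ((1/ΩY)*Real.exp (-((1/ΩY)*y)))
      - ((1/ΩX)*δ2) * ((1/ΩY)*Real.exp (-((1/ΩY)*y)) * expInt (c*y))) (Set.Ioi y0) := iA.sub iB
  have vA : ∫ y in Set.Ioi y0,
      ((1/ΩX)*δ2*expInt ((1/ΩX)*lam1)) * ((1/ΩY)*Real.exp (-((1/ΩY)*y)))
      = ((1/ΩX)*δ2*expInt ((1/ΩX)*lam1)) * Real.exp (-((1/ΩY)*y0)) := by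
    rw [MeasureTheory.integral_const_mul, integral_c_exp_Ioi y0 hb]
  have vB : ∫ y in Set.Ioi y0,
      ((1/ΩX)*δ2) * ((1/ΩY)*Real.exp (-((1/ΩY)*y)) * expInt (c*y))
      = ((1/ΩX)*δ2) * (Real.exp (-((1/ΩY)*y0)) * expInt (c*y0) - expInt ((1/ΩY+c)*y0)) := by
    rw [MeasureTheory.integral_const_mul, key_swap hb hc hy0]
  have vC : ∫ y in Set.Ioi y0,
      (δ1*(1/ΩY)) * (Real.exp (-((1/ΩY + c)*y))/y)
      = (δ1*(1/ΩY)) * expInt ((1/ΩY+c)*y0) := by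
    rw [MeasureTheory.integral_const_mul, expInt_scale hbc hy0]
  rw [MeasureTheory.integral_add iAB iC, MeasureTheory.integral_sub iA iB, vA, vB, vC]
  have e1 : (1/ΩX)*lam1 = lam1/ΩX := by ring
  have e2 : c*y0 = δ2*y0/(δ1*ΩX) := by rw [hcdef]; field_simp
  have e3 : (1/ΩY + c)*y0 = (1/ΩY + δ2/(δ1*ΩX))*y0 := by rw [hcdef]; field_simp
  have e4 : -((1/ΩY)*y0) = -y0/ΩY := by ring
  rw [e1, e2, e3, e4]
  ring
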